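/- Let ν : ℝ^d∖{0} → [0,∞] be measurable with symmetric decreasing rearrangement ν*. For any measurable E ⊂ ℝ^d with |E| < ∞, set r_E = (|E|/c_d)^{1/d}. Then for every x ∈ ℝ^d, ∫_{E^c} ν(x−y) dy ≥ ∫_{{h : ν(h) < ν*(r_E)}} ν(h) dh. -/

import Mathlib

open MeasureTheory ENNReal Set Filter

/-- The symmetric decreasing rearrangement (radial profile) of a kernel `ν` on `ℝ^d`:
`ν*(r) = inf{s > 0 : |{ν > s}| ≤ c_d r^d}` where `c_d` is the volume of the unit ball. -/
noncomputable def symmRearr {d : ℕ} (ν : EuclideanSpace ℝ (Fin d) → ℝ≥0∞) (r : ℝ) : ℝ≥0∞ :=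
  sInf {s : ℝ≥0∞ | 0 < s ∧
    volume {h : EuclideanSpace ℝ (Fin d) | s < ν h} ≤
      volume (Metric.ball (0 : EuclideanSpace ℝ (Fin d)) 1) * ENNReal.ofReal (r ^ d)}

/-- for any measurable kernel `ν` and any measurable set `E` of finite measure,
`∫_{E^c} ν(x−y) dy ≥ ∫_{{ν < ν*(r_E)}} ν(h) dh` with `r_E = (|E|/c_d)^{1/d}`. -/
theorem stmt_6 {d : ℕ} (hd : 1 ≤ d) (ν : EuclideanSpace ℝ (Fin d) → ℝ≥0∞) (hν : Measurable ν)
    (E : Set (EuclideanSpace ℝ (Fin d))) (hE : MeasurableSet E) (hEfin : volume E < ⊤) :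
    ∀ x : EuclideanSpace ℝ (Fin d),
      ∫⁻ h in {h : EuclideanSpace ℝ (Fin d) |
          ν h < symmRearr ν
            (((volume E).toReal /
              (volume (Metric.ball (0 : EuclideanSpace ℝ (Fin d)) 1)).toReal) ^ ((1 : ℝ) / d))},
        ν h ≤
      ∫⁻ y in Eᶜ, ν (x - y) := by
  intro x
  classical
  set c : ℝ≥0∞ := volume (Metric.ball (0 : EuclideanSpace ℝ (Fin d)) 1) with hc
  have hc0 : c ≠ 0 := (Metric.measure_ball_pos volume 0 one_pos).ne'
  have hctop : c ≠ ⊤ := measure_ball_lt_top.ne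
  set r : ℝ := ((volume E).toReal / c.toReal) ^ ((1 : ℝ) / d) with hr
  set t : ℝ≥0∞ := symmRearr ν r with ht
  -- key : c * ofReal (r ^ d) = volume E
  have hrnn : 0 ≤ (volume E).toReal / c.toReal := by positivity
  have hdne : (d : ℝ) ≠ 0 := Nat.cast_ne_zero.mpr (Nat.one_le_iff_ne_zero.mp hd)
  have hrd : r ^ d = (volume E).toReal / c.toReal := by
    rw [hr, ← Real.rpow_natCast (((volume E).toReal / c.toReal) ^ ((1:ℝ)/d)) d,
      ← Real.rpow_mul hrnn, one_div, inv_mul_cancel₀ hdne, Real.rpow_one]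
  have key : c * ENNReal.ofReal (r ^ d) = volume E := by
    rw [hrd, ENNReal.ofReal_div_of_pos (ENNReal.toReal_pos hc0 hctop),
      ENNReal.ofReal_toReal hEfin.ne, ENNReal.ofReal_toReal hctop]
    exact ENNReal.mul_div_cancel hc0 hctop
  -- the map T y = x - y
  set T : EuclideanSpace ℝ (Fin d) → EuclideanSpace ℝ (Fin d) := fun h => x - h with hT
  have hTmp : MeasurePreserving T volume volume := Measure.measurePreserving_sub_left volume x
  have hTinv : ∀ S : Set (EuclideanSpace ℝ (Fin d)), T ⁻¹' (T ⁻¹' S) = S := by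
    intro S; ext y; simp [hT, _root_.sub_sub_cancel]
  set B : Set (EuclideanSpace ℝ (Fin d)) := T ⁻¹' Eᶜ with hB
  have hBm : MeasurableSet B := hTmp.measurable hE.compl
  -- rewrite RHS
  have hRHS : ∫⁻ y in Eᶜ, ν (x - y) = ∫⁻ h in B, ν h := by
    have := hTmp.setLIntegral_comp_preimage (s := B) hBm hν
    rw [hB, hTinv] at this
    exact this
  rw [hRHS]
  -- volume of Bᶜ
  have hBc : Bᶜ = T ⁻¹' E := by rw [hB, ← preimage_compl, compl_compl]
  have hBcvol : volume Bᶜ = volume E := by rw [hBc]; exact hTmp.measure_preimage hE.nullMeasurableSet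
  -- pass to the with-density measure
  set μ : Measure (EuclideanSpace ℝ (Fin d)) := volume.withDensity ν with hμ
  set A : Set (EuclideanSpace ℝ (Fin d)) := {h : EuclideanSpace ℝ (Fin d) | ν h < t} with hA
  have hAm : MeasurableSet A := hν measurableSet_Iio
  rw [show (∫⁻ h in A, ν h) = μ A from (withDensity_apply ν hAm).symm,
    show (∫⁻ h in B, ν h) = μ B from (withDensity_apply ν hBm).symm]
  -- trivial case t = 0
  rcases eq_or_lt_of_le (zero_le : (0:ℝ≥0∞) ≤ t) with ht0 | ht0
  · have : A = ∅ := by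
      ext h; simp [hA, ← ht0]
    simp [this]
  -- choose a sequence increasing to t
  obtain ⟨u, hu_mono, hu_mem, hu_tend⟩ := exists_seq_strictMono_tendsto' ht0
  set A' : ℕ → Set (EuclideanSpace ℝ (Fin d)) := fun n => {h : EuclideanSpace ℝ (Fin d) | ν h ≤ u n} with hA'
  have hA'm : ∀ n, MeasurableSet (A' n) := fun n => hν measurableSet_Iic
  have hA'mono : Monotone A' := fun m n hmn h hh => le_trans hh (hu_mono.monotone hmn)
  have hAeq : A = ⋃ n, A' n := by
    ext h
    simp only [hA, mem_setOf_eq, mem_iUnion, hA']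
    constructor
    · intro hh
      obtain ⟨n, hn⟩ := (hu_tend.eventually_const_lt hh).exists
      exact ⟨n, hn.le⟩
    · rintro ⟨n, hn⟩
      exact lt_of_le_of_lt hn (hu_mem n).2
  rw [hAeq, hA'mono.measure_iUnion]
  refine iSup_le fun n => ?_
  -- per-level inequality
  set s : ℝ≥0∞ := u n with hs
  have hs0 : 0 < s := (hu_mem n).1
  have hst : s < t := (hu_mem n).2
  -- s is not in the defining set of the infimum
  have hCbig : volume E < volume {h : EuclideanSpace ℝ (Fin d) | s < ν h} := by
    rw [← key]
    by_contra hcon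
    have hts : t ≤ s := by
      rw [ht, symmRearr]
      exact sInf_le ⟨hs0, not_lt.mp hcon⟩
    exact absurd hts (not_le.mpr hst)
  set C : Set (EuclideanSpace ℝ (Fin d)) := {h : EuclideanSpace ℝ (Fin d) | s < ν h} with hC
  have hCm : MeasurableSet C := hν measurableSet_Ioi
  -- volume (A' n ∩ Bᶜ) ≤ volume (C ∩ B)
  have hfin : volume (C ∩ Bᶜ) ≠ ⊤ :=
    (lt_of_le_of_lt (measure_mono inter_subset_right) (hBcvol ▸ hEfin)).ne
  have hvol : volume (A' n ∩ Bᶜ) ≤ volume (C ∩ B) := by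
    have h1 : volume (C ∩ B) + volume (C \ B) = volume C := measure_inter_add_diff C hBm
    have h2 : volume (Bᶜ ∩ C) + volume (Bᶜ \ C) = volume Bᶜ := measure_inter_add_diff Bᶜ hCm
    have h3 : Bᶜ \ C = Bᶜ ∩ Cᶜ := rfl
    have h4 : A' n ∩ Bᶜ ⊆ Bᶜ \ C := by
      rintro h ⟨hh1, hh2⟩
      exact ⟨hh2, fun hh3 => absurd (lt_of_lt_of_le hh3 hh1) (lt_irrefl s)⟩
    refine le_trans (measure_mono h4) ?_
    have h5 : volume (Bᶜ ∩ C) + volume (Bᶜ \ C) ≤ volume (C ∩ B) + volume (Bᶜ ∩ C) := by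
      rw [h2, hBcvol]
      calc volume E ≤ volume C := hCbig.le
        _ = volume (C ∩ B) + volume (C \ B) := h1.symm
        _ = volume (C ∩ B) + volume (Bᶜ ∩ C) := by
            rw [diff_eq, inter_comm Bᶜ C]
    have h6 : volume (Bᶜ ∩ C) ≠ ⊤ := by rwa [inter_comm] at hfin
    rw [add_comm (volume (C ∩ B)) (volume (Bᶜ ∩ C))] at h5
    exact ENNReal.le_of_add_le_add_left h6 h5
  -- bound μ (A' n ∩ Bᶜ) ≤ s * volume (A' n ∩ Bᶜ)
  have hb1 : μ (A' n ∩ Bᶜ) ≤ s * volume (A' n ∩ Bᶜ) := by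
    rw [hμ, withDensity_apply ν ((hA'm n).inter hBm.compl)]
    calc ∫⁻ h in A' n ∩ Bᶜ, ν h ≤ ∫⁻ _ in A' n ∩ Bᶜ, s :=
          setLIntegral_mono' ((hA'm n).inter hBm.compl) (fun h hh => hh.1)
      _ = s * volume (A' n ∩ Bᶜ) := setLIntegral_const _ _
  have hb2 : s * volume (C ∩ B) ≤ μ (C ∩ B) := by
    rw [hμ, withDensity_apply ν (hCm.inter hBm)]
    calc s * volume (C ∩ B) = ∫⁻ _ in C ∩ B, s := (setLIntegral_const _ _).symm
      _ ≤ ∫⁻ h in C ∩ B, ν h :=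
          setLIntegral_mono' (hCm.inter hBm) (fun h hh => hh.1.le)
  -- assemble
  have hsplit : μ (A' n) = μ (A' n ∩ B) + μ (A' n ∩ Bᶜ) := by
    rw [← measure_inter_add_diff (A' n) hBm, diff_eq]
  have hdisj : Disjoint (A' n ∩ B) (C ∩ B) := by
    refine Set.disjoint_left.mpr ?_
    rintro h ⟨hh1, _⟩ ⟨hh2, _⟩
    exact absurd (lt_of_lt_of_le hh2 hh1) (lt_irrefl s)
  have hunion : μ (A' n ∩ B) + μ (C ∩ B) ≤ μ B := by
    rw [← measure_union hdisj (hCm.inter hBm)]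
    exact measure_mono (union_subset inter_subset_right inter_subset_right)
  calc μ (A' n) = μ (A' n ∩ B) + μ (A' n ∩ Bᶜ) := hsplit
    _ ≤ μ (A' n ∩ B) + s * volume (A' n ∩ Bᶜ) := add_le_add_right hb1 _
    _ ≤ μ (A' n ∩ B) + s * volume (C ∩ B) :=
        add_le_add_right (mul_le_mul_right hvol s) _
    _ ≤ μ (A' n ∩ B) + μ (C ∩ B) := by gcongr
    _ ≤ μ B := hunion
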